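/- arXiv:1503.00469 — 2 statements merged into one kernel-verified Lean document; each statement's English description precedes it below -/
import Mathlib

section
/- Let α ∈ (0,1) and R > 0, and let E_R = ℝ × (−R, R) ⊆ ℝ² be the straight band of width 2R. Then for every x ∈ ∂E_R the principal-value limit defining H_{E_R}(x) exists and H_{E_R}(x) = h_R, where h_R := −2 ∫_ℝ ( F(2R/|t|) − F(+∞) ) |t|^{−1−α} dt; this integral converges absolutely and h_R > 0. -/
open MeasureTheory Filter Topology Classical Real

/-- `τ_E = 1_E − 1_{E^c}` in the plane. -/
noncomputable def tauE (E : Set (EuclideanSpace ℝ (Fin 2))) (y : EuclideanSpace ℝ (Fin 2)) : ℝ :=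
  if y ∈ E then 1 else -1

/-- `F(q) = ∫_0^q (1+τ²)^{−(2+α)/2} dτ`. -/
noncomputable def Fa (α q : ℝ) : ℝ := ∫ τ in (0:ℝ)..q, (1 + τ ^ 2) ^ (-(2 + α) / 2)

/-- `F(+∞) = ∫_0^∞ (1+τ²)^{−(2+α)/2} dτ`. -/
noncomputable def FaInf (α : ℝ) : ℝ := ∫ τ in Set.Ioi (0:ℝ), (1 + τ ^ 2) ^ (-(2 + α) / 2)

section NMCaux
open Set

local notation "E2" => EuclideanSpace ℝ (Fin 2)

lemma k1_int {α : ℝ} (hα : 0 ≤ α) : Integrable (fun τ : ℝ => (1 + τ ^ 2) ^ (-(2 + α) / 2)) := by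
  apply integrable_inv_one_add_sq.mono'
  · apply Measurable.aestronglyMeasurable; fun_prop
  · refine Eventually.of_forall fun τ => ?_
    have h1 : (0:ℝ) < 1 + τ ^ 2 := by positivity
    rw [Real.norm_eq_abs, abs_of_nonneg (Real.rpow_nonneg h1.le _)]
    calc (1 + τ ^ 2) ^ (-(2 + α) / 2) ≤ (1 + τ ^ 2) ^ (-1 : ℝ) := by
          apply Real.rpow_le_rpow_of_exponent_le (by nlinarith) (by linarith)
      _ = (1 + τ ^ 2)⁻¹ := by rw [Real.rpow_neg_one]

lemma FaInf_sub_Fa {α : ℝ} (hα : 0 ≤ α) {q : ℝ} (hq : 0 ≤ q) :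
    FaInf α - Fa α q = ∫ τ in Ioi q, (1 + τ ^ 2) ^ (-(2 + α) / 2) := by
  have hint := (k1_int hα (α := α))
  rw [FaInf, Fa, intervalIntegral.integral_of_le hq,
    ← Ioc_union_Ioi_eq_Ioi hq, setIntegral_union (Ioc_disjoint_Ioi le_rfl) measurableSet_Ioi
      hint.integrableOn hint.integrableOn]
  ring

lemma abs_coord_le_norm (z : E2) (i : Fin 2) : |z i| ≤ ‖z‖ := by
  rw [EuclideanSpace.norm_eq, ← Real.sqrt_sq_eq_abs]
  apply Real.sqrt_le_sqrt
  fin_cases i <;> simp [Fin.sum_univ_two, sq_abs] <;> positivity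

lemma meas_rpow_norm {α : ℝ} : Measurable (fun z : E2 => ‖z‖ ^ (-(2 + α))) := by fun_prop

lemma integrableOn_rpow_norm {α : ℝ} (hα : 0 < α) {ε : ℝ} (hε : 0 < ε) :
    IntegrableOn (fun z : E2 => ‖z‖ ^ (-(2 + α))) {z : E2 | ε ≤ ‖z‖} := by
  have hdim : ((Module.finrank ℝ E2 : ℝ)) < 2 + α := by
    simp [finrank_euclideanSpace]; linarith
  have hint : Integrable (fun z : E2 => (1 + 1/ε) ^ (2+α) * (1 + ‖z‖) ^ (-(2 + α))) :=
    (integrable_one_add_norm hdim).const_mul _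
  apply (hint.integrableOn).mono' meas_rpow_norm.aestronglyMeasurable
  filter_upwards [self_mem_ae_restrict
    (by exact measurableSet_le measurable_const (by fun_prop) : MeasurableSet {z : E2 | ε ≤ ‖z‖})]
    with z hz
  have hz0 : (0:ℝ) < ‖z‖ := lt_of_lt_of_le hε hz
  rw [Real.norm_eq_abs, abs_of_nonneg (Real.rpow_nonneg (norm_nonneg _) _)]
  have h1 : 1 + ‖z‖ ≤ (1 + 1/ε) * ‖z‖ := by
    have : 1 ≤ ‖z‖ / ε := (one_le_div hε).2 hz
    have : 1 ≤ (1/ε) * ‖z‖ := by rw [one_div, inv_mul_eq_div]; exact this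
    nlinarith [norm_nonneg z]
  have hb : (0:ℝ) < 1 + 1/ε := by positivity
  have h2 : ((1 + 1/ε) * ‖z‖) ^ (-(2+α)) ≤ (1 + ‖z‖) ^ (-(2+α)) :=
    Real.rpow_le_rpow_of_nonpos (by positivity) h1 (by linarith)
  rw [Real.mul_rpow hb.le (norm_nonneg _)] at h2
  calc ‖z‖ ^ (-(2+α)) = (1+1/ε)^(2+α) * ((1+1/ε) ^ (-(2+α)) * ‖z‖ ^ (-(2+α))) := by
        rw [← mul_assoc, ← Real.rpow_add hb]
        rw [show 2 + α + -(2+α) = 0 by ring, Real.rpow_zero, one_mul]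
    _ ≤ (1+1/ε)^(2+α) * (1 + ‖z‖) ^ (-(2+α)) := by
        apply mul_le_mul_of_nonneg_left h2 (Real.rpow_nonneg hb.le _)

lemma integrableOn_S {α R : ℝ} (hα : 0 < α) (hR : 0 < R) :
    IntegrableOn (fun z : E2 => ‖z‖ ^ (-(2 + α))) {z : E2 | 2*R ≤ |z 1|} := by
  apply (integrableOn_rpow_norm hα (by linarith : (0:ℝ) < 2*R)).mono_set
  intro z hz
  exact le_trans hz (abs_coord_le_norm z 1)

noncomputable def eE : E2 ≃ᵐ ℝ × ℝ :=
  (MeasurableEquiv.toLp 2 (Fin 2 → ℝ)).symm.trans MeasurableEquiv.finTwoArrow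

lemma eE_mp : MeasurePreserving eE volume volume :=
  (volume_preserving_finTwoArrow ℝ).comp (EuclideanSpace.volume_preserving_symm_measurableEquiv_toLp (Fin 2))

noncomputable def kk (α : ℝ) (p : ℝ × ℝ) : ℝ := (p.1^2 + p.2^2) ^ (-(2+α)/2)

lemma norm_eE_symm {α : ℝ} (p : ℝ × ℝ) : ‖eE.symm p‖ ^ (-(2+α)) = kk α p := by
  rw [kk]
  have h0 : (eE.symm p) 0 = p.1 := rfl
  have h1 : (eE.symm p) 1 = p.2 := rfl
  have hA : (0:ℝ) ≤ p.1^2 + p.2^2 := by positivity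
  rw [EuclideanSpace.norm_eq]
  simp only [Fin.sum_univ_two, h0, h1, Real.norm_eq_abs, sq_abs]
  rw [Real.sqrt_eq_rpow, ← Real.rpow_mul hA]
  ring_nf

lemma fubini_key {α R : ℝ} (hα : α ∈ Set.Ioo (0:ℝ) 1) (hR : 0 < R) :
    Integrable (fun t : ℝ => (Fa α (2 * R / |t|) - FaInf α) * |t| ^ (-(1 + α))) ∧
    (∫ z in {z : E2 | 2*R ≤ |z 1|}, ‖z‖ ^ (-(2 + α))) =
      -2 * ∫ t : ℝ, (Fa α (2 * R / |t|) - FaInf α) * |t| ^ (-(1 + α)) := by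
  obtain ⟨hα0, hα1⟩ := hα
  set k : ℝ × ℝ → ℝ := kk α with hk
  set Sp : Set (ℝ×ℝ) := {p | 2*R ≤ |p.2|} with hSpdef
  have hSp : MeasurableSet Sp := measurableSet_le measurable_const (by fun_prop)
  have hkm : Measurable k := by
    have hkb : k = fun p : ℝ × ℝ => (p.1^2 + p.2^2) ^ (-(2+α)/2) := rfl
    rw [hkb]
    fun_prop
  have hcoord : Measurable (fun z : E2 => z 1) := by
    have h1 : Measurable (fun z : E2 => eE z) := eE.measurable
    exact measurable_snd.comp h1
  have hSE : MeasurableSet {z : E2 | 2*R ≤ |z 1|} :=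
    measurableSet_le measurable_const hcoord.abs
  have htrans := MeasurePreserving.setIntegral_preimage_emb (eE_mp.symm)
      eE.symm.measurableEmbedding (fun z : E2 => ‖z‖ ^ (-(2+α))) {z : E2 | 2*R ≤ |z 1|}
  have hset : eE.symm ⁻¹' {z : E2 | 2*R ≤ |z 1|} = Sp := rfl
  have hV : (∫ z in {z : E2 | 2*R ≤ |z 1|}, ‖z‖ ^ (-(2+α))) = ∫ p in Sp, k p := by
    rw [← htrans, hset]
    exact setIntegral_congr_fun hSp (fun p _ => norm_eE_symm (α := α) p)
  have hIk : IntegrableOn k Sp := by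
    have h1 : Integrable ({z : E2 | 2*R ≤ |z 1|}.indicator (fun z => ‖z‖ ^ (-(2+α)))) :=
      (integrable_indicator_iff hSE).2 (integrableOn_S hα0 hR)
    have h2 : Integrable ((({z : E2 | 2*R ≤ |z 1|}.indicator (fun z => ‖z‖ ^ (-(2+α))))) ∘ eE.symm) :=
      ((eE_mp.symm).integrable_comp_emb eE.symm.measurableEmbedding).2 h1
    have h3 : (({z : E2 | 2*R ≤ |z 1|}.indicator (fun z => ‖z‖ ^ (-(2+α))))) ∘ eE.symm
        = Sp.indicator k := by
      funext p
      by_cases hp : p ∈ Sp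
      · rw [Function.comp_apply, Set.indicator_of_mem hp,
          Set.indicator_of_mem (show eE.symm p ∈ {z : E2 | 2*R ≤ |z 1|} from hp)]
        exact norm_eE_symm (α := α) p
      · rw [Function.comp_apply, Set.indicator_of_notMem hp,
          Set.indicator_of_notMem (show eE.symm p ∉ {z : E2 | 2*R ≤ |z 1|} from hp)]
    rw [h3] at h2
    exact (integrable_indicator_iff hSp).1 h2
  have hF : Integrable (Sp.indicator k) (volume.prod volume) := by
    rw [← Measure.volume_eq_prod]
    exact (integrable_indicator_iff hSp).2 hIk
  have h0 : ∀ᵐ t : ℝ, t ≠ 0 := compl_mem_ae_iff.2 Real.volume_singleton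
  have hinner : ∀ᵐ t : ℝ, (∫ s, Sp.indicator k (t, s)) =
      -2 * ((Fa α (2*R/|t|) - FaInf α) * |t| ^ (-(1+α))) := by
    filter_upwards [hF.prod_right_ae, h0] with t hti ht
    have ht' : (0:ℝ) < |t| := abs_pos.2 ht
    set g : ℝ → ℝ := fun s => kk α (t, s) with hg
    set A : Set ℝ := {s : ℝ | 2*R ≤ |s|} with hA
    have hAm : MeasurableSet A := measurableSet_le measurable_const (by fun_prop)
    have hfun : (fun s => Sp.indicator k (t, s)) = A.indicator g := by
      funext s
      by_cases hs : 2*R ≤ |s|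
      · rw [Set.indicator_of_mem (show (t,s) ∈ Sp from hs), Set.indicator_of_mem (show s ∈ A from hs)]
      · rw [Set.indicator_of_notMem (show (t,s) ∉ Sp from hs), Set.indicator_of_notMem (show s ∉ A from hs)]
    rw [hfun] at hti ⊢
    have hIg : IntegrableOn g A := (integrable_indicator_iff hAm).1 hti
    have hAeq : A = Iic (-(2*R)) ∪ Ici (2*R) := by
      ext s
      simp only [hA, Set.mem_setOf_eq, Set.mem_union, Set.mem_Iic, Set.mem_Ici, le_abs, le_neg]
      tauto
    have hdisj : Disjoint (Iic (-(2*R))) (Ici (2*R)) :=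
      Iic_disjoint_Ici.2 (by linarith)
    rw [integral_indicator hAm, hAeq,
      setIntegral_union hdisj measurableSet_Ici
        (hIg.mono_set (by rw [hAeq]; exact subset_union_left))
        (hIg.mono_set (by rw [hAeq]; exact subset_union_right))]
    have hneg : (∫ s in Iic (-(2*R)), g s) = ∫ s in Ioi (2*R), g s := by
      rw [← integral_comp_neg_Ioi]
      congr 1; funext x; rw [hg]; simp only [kk, neg_sq]
    rw [hneg, integral_Ici_eq_integral_Ioi]
    have hq0 : (0:ℝ) < 2*R/|t| := by positivity
    have hcv := integral_comp_mul_left_Ioi g (2*R/|t|) ht'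
    rw [show |t| * (2*R/|t|) = 2*R by field_simp, smul_eq_mul] at hcv
    have hgx : ∀ x : ℝ, g (|t| * x) = |t| ^ (-(2+α)) * (1+x^2) ^ (-(2+α)/2) := by
      intro x
      have hts : t^2 + (|t| * x)^2 = t^2 * (1 + x^2) := by rw [mul_pow, sq_abs]; ring
      rw [hg]; simp only [kk]
      rw [hts, Real.mul_rpow (by positivity) (by positivity)]
      congr 1
      rw [← sq_abs, ← Real.rpow_natCast |t| 2, ← Real.rpow_mul (abs_nonneg t)]
      congr 1
      push_cast
      ring
    have hval : (∫ x in Ioi (2*R/|t|), g (|t| * x)) =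
        |t| ^ (-(2+α)) * (FaInf α - Fa α (2*R/|t|)) := by
      rw [FaInf_sub_Fa hα0.le hq0.le]
      simp_rw [hgx]
      rw [integral_const_mul]
    have hcv2 : |t| ^ (-(2+α)) * (FaInf α - Fa α (2*R/|t|)) = |t|⁻¹ * ∫ x in Ioi (2*R), g x := by
      rw [← hval]; exact hcv
    have hIoi : (∫ s in Ioi (2*R), g s) = |t| * (|t| ^ (-(2+α)) * (FaInf α - Fa α (2*R/|t|))) := by
      rw [hcv2, ← mul_assoc, mul_inv_cancel₀ (ne_of_gt ht'), one_mul]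
    have hpow : |t| * |t| ^ (-(2+α)) = |t| ^ (-(1+α)) := by
      nth_rewrite 1 [← Real.rpow_one |t|]
      rw [← Real.rpow_add ht']
      congr 1
      ring
    rw [hIoi]
    linear_combination (2 * (FaInf α - Fa α (2*R/|t|))) * hpow
  have hII : Integrable (fun t : ℝ => ∫ s, Sp.indicator k (t, s)) := hF.integral_prod_left
  have hInt2 : Integrable (fun t : ℝ => -2 * ((Fa α (2*R/|t|) - FaInf α) * |t| ^ (-(1+α)))) :=
    hII.congr hinner
  constructor
  · have := hInt2.const_mul (-1/2 : ℝ)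
    apply this.congr
    filter_upwards with t
    ring
  · rw [hV, ← integral_indicator hSp]
    have : (∫ p, Sp.indicator k p) = ∫ p, Sp.indicator k p ∂(volume.prod volume) := by
      rw [← Measure.volume_eq_prod]
    rw [this, integral_prod _ hF, integral_congr_ae hinner, integral_const_mul]

lemma sum_s {R : ℝ} (hR : 0 < R) {a : ℝ} (ha : a = -(2*R) ∨ a = 0) {u : ℝ} (hu : u ≠ 0) :
    ((if a < u ∧ u < a + 2*R then (1:ℝ) else -1) +
      (if a < -u ∧ -u < a + 2*R then (1:ℝ) else -1)) =
    (if 2*R ≤ |u| then (-2:ℝ) else 0) := by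
  by_cases h : 2*R ≤ |u|
  · rw [if_pos h, if_neg, if_neg]
    · ring
    · rintro ⟨p, q⟩
      rcases le_abs.1 h with h' | h' <;> rcases ha with rfl | rfl <;> linarith
    · rintro ⟨p, q⟩
      rcases le_abs.1 h with h' | h' <;> rcases ha with rfl | rfl <;> linarith
  · push_neg at h
    obtain ⟨h1, h2⟩ := abs_lt.1 h
    rw [if_neg (not_le.2 h)]
    rcases lt_or_gt_of_ne hu with hlt | hgt <;> rcases ha with rfl | rfl
    · rw [if_pos ⟨by linarith, by linarith⟩, if_neg (by rintro ⟨p, q⟩; linarith)]; ring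
    · rw [if_neg (by rintro ⟨p, q⟩; linarith), if_pos ⟨by linarith, by linarith⟩]; ring
    · rw [if_neg (by rintro ⟨p, q⟩; linarith), if_pos ⟨by linarith, by linarith⟩]; ring
    · rw [if_pos ⟨by linarith, by linarith⟩, if_neg (by rintro ⟨p, q⟩; linarith)]; ring

lemma coord_zero_null : (volume : Measure E2) {z : E2 | z 1 = 0} = 0 := by
  have hpre : {z : E2 | z 1 = 0} = eE ⁻¹' {p : ℝ × ℝ | p.2 = 0} := rfl
  have hms : MeasurableSet {p : ℝ × ℝ | p.2 = 0} :=
    (measurableSet_singleton (0:ℝ)).preimage measurable_snd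
  rw [hpre, eE_mp.measure_preimage hms.nullMeasurableSet]
  have : {p : ℝ × ℝ | p.2 = 0} = (Set.univ : Set ℝ) ×ˢ ({0} : Set ℝ) := by
    ext p
    constructor
    · intro hp
      exact ⟨Set.mem_univ _, hp⟩
    · rintro ⟨-, hp⟩
      exact hp
  rw [this, Measure.volume_eq_prod, Measure.prod_prod]
  simp

lemma ae_coord_ne : ∀ᵐ z : E2, z 1 ≠ 0 := by
  rw [ae_iff]
  simp only [ne_eq, not_not]
  exact coord_zero_null

lemma Vpos {α R : ℝ} (hα : 0 < α) (hR : 0 < R) :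
    0 < ∫ z in {z : E2 | 2*R ≤ |z 1|}, ‖z‖ ^ (-(2+α)) := by
  have hcoord : Measurable (fun z : E2 => z 1) := measurable_snd.comp eE.measurable
  have hSm : MeasurableSet {z : E2 | 2*R ≤ |z 1|} :=
    measurableSet_le measurable_const hcoord.abs
  have hsub : {z : E2 | 2*R ≤ |z 1|} ⊆ {z : E2 | 2*R ≤ ‖z‖} :=
    fun z hz => le_trans hz (abs_coord_le_norm z 1)
  rw [setIntegral_pos_iff_support_of_nonneg_ae]
  · -- 0 < volume (support ∩ S)
    set z0 : E2 := eE.symm (0, 2*R+1) with hz0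
    have hball : Metric.ball z0 1 ⊆
        (Function.support (fun z : E2 => ‖z‖ ^ (-(2+α)))) ∩ {z : E2 | 2*R ≤ |z 1|} := by
      intro z hz
      have hz1 : |z 1 - (2*R+1)| ≤ ‖z - z0‖ := by
        have := abs_coord_le_norm (z - z0) 1
        have h2 : (z - z0) 1 = z 1 - (2*R+1) := by
          rw [PiLp.sub_apply]; rfl
        rwa [h2] at this
      have hd : ‖z - z0‖ < 1 := by
        rw [← dist_eq_norm]; exact hz
      have hgt : 2*R ≤ z 1 := by
        rcases abs_lt.1 (lt_of_le_of_lt hz1 hd) with ⟨p, q⟩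
        linarith
      have habs : 2*R ≤ |z 1| := le_trans hgt (le_abs_self _)
      refine ⟨?_, habs⟩
      have hnz : (0:ℝ) < ‖z‖ := lt_of_lt_of_le (by linarith) (le_trans habs (abs_coord_le_norm z 1))
      exact Function.mem_support.2 (ne_of_gt (Real.rpow_pos_of_pos hnz _))
    calc (0 : ENNReal) < volume (Metric.ball z0 1) := Metric.measure_ball_pos _ _ one_pos
      _ ≤ _ := measure_mono hball
  · filter_upwards with z
    positivity
  · exact (integrableOn_rpow_norm hα (by linarith : (0:ℝ) < 2*R)).mono_set hsub

lemma frontier_sub {R : ℝ} (hR : 0 < R) :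
    frontier {p : E2 | -R < p 1 ∧ p 1 < R} ⊆ {p : E2 | p 1 = R ∨ p 1 = -R} := by
  have hc : Continuous (fun p : E2 => p 1) := (EuclideanSpace.proj (1 : Fin 2)).continuous
  have hpre : {p : E2 | -R < p 1 ∧ p 1 < R} = (fun p : E2 => p 1) ⁻¹' (Ioo (-R) R) := rfl
  rw [hpre]
  intro p hp
  have := hc.frontier_preimage_subset _ hp
  rw [frontier_Ioo (by linarith : -R < R)] at this
  rcases this with h | h
  · exact Or.inr h
  · exact Or.inl h

lemma pv_eq {α R : ℝ} (hα : 0 < α) (hR : 0 < R) (x : E2) (hx : x 1 = R ∨ x 1 = -R)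
    {ε : ℝ} (hε : 0 < ε) (hε2 : ε ≤ 2*R) :
    (∫ y in {y : E2 | ε ≤ dist y x},
        tauE {p : E2 | -R < p 1 ∧ p 1 < R} y * dist x y ^ (-(2+α)))
      = - ∫ z in {z : E2 | 2*R ≤ |z 1|}, ‖z‖ ^ (-(2+α)) := by
  set E : Set E2 := {p : E2 | -R < p 1 ∧ p 1 < R} with hEdef
  obtain ⟨a, ha, hmem⟩ : ∃ a : ℝ, (a = -(2*R) ∨ a = 0) ∧ ∀ z : E2,
      ((x + z) ∈ E ↔ (a < z 1 ∧ z 1 < a + 2*R)) := by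
    rcases hx with hx1 | hx1
    · refine ⟨-(2*R), Or.inl rfl, fun z => ?_⟩
      have hadd : (x + z) 1 = R + z 1 := by rw [PiLp.add_apply, hx1]
      constructor
      · rintro ⟨p, q⟩
        rw [hadd] at p q
        constructor <;> linarith
      · rintro ⟨p, q⟩
        refine ⟨?_, ?_⟩ <;> rw [hadd] <;> linarith
    · refine ⟨0, Or.inr rfl, fun z => ?_⟩
      have hadd : (x + z) 1 = -R + z 1 := by rw [PiLp.add_apply, hx1]
      constructor
      · rintro ⟨p, q⟩
        rw [hadd] at p q
        constructor <;> linarith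
      · rintro ⟨p, q⟩
        refine ⟨?_, ?_⟩ <;> rw [hadd] <;> linarith
  have hcoord : Measurable (fun z : E2 => z 1) := measurable_snd.comp eE.measurable
  set T : Set E2 := {z : E2 | ε ≤ ‖z‖} with hT
  have hTm : MeasurableSet T := measurableSet_le measurable_const measurable_norm
  set f : E2 → ℝ :=
    fun z => (if a < z 1 ∧ z 1 < a + 2*R then (1:ℝ) else -1) * ‖z‖ ^ (-(2+α)) with hf
  set g : E2 → ℝ :=
    fun z => (if a < -(z 1) ∧ -(z 1) < a + 2*R then (1:ℝ) else -1) * ‖z‖ ^ (-(2+α)) with hg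
  -- step 1 : translation
  have h1 : (∫ y in {y : E2 | ε ≤ dist y x}, tauE E y * dist x y ^ (-(2+α)))
      = ∫ z in T, f z := by
    have htr := MeasurePreserving.setIntegral_preimage_emb
      (measurePreserving_add_left (volume : Measure E2) x)
      (MeasurableEquiv.addLeft x).measurableEmbedding
      (fun y => tauE E y * dist x y ^ (-(2+α))) {y : E2 | ε ≤ dist y x}
    rw [← htr]
    have hTeq : ((fun z : E2 => x + z) ⁻¹' {y : E2 | ε ≤ dist y x}) = T := by
      ext z
      simp only [Set.mem_preimage, Set.mem_setOf_eq, hT, dist_self_add_left]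
    rw [show ((x + ·) ⁻¹' {y : E2 | ε ≤ dist y x}) = T from hTeq]
    apply setIntegral_congr_fun hTm
    intro z _
    have hd : dist x (x + z) = ‖z‖ := dist_self_add_right z x
    rw [hf]
    simp only [tauE, hmem z, hd]
  -- step 2 : reflection
  have h2 : (∫ z in T, f z) = ∫ z in T, g z := by
    have hneg := MeasurePreserving.setIntegral_preimage_emb
      (Measure.measurePreserving_neg (volume : Measure E2))
      (MeasurableEquiv.neg E2).measurableEmbedding f T
    rw [← hneg]
    have hTeq : ((Neg.neg : E2 → E2) ⁻¹' T) = T := by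
      ext z
      simp only [Set.mem_preimage, Set.mem_setOf_eq, hT, norm_neg]
    rw [show ((Neg.neg : E2 → E2) ⁻¹' T) = T from hTeq]
    apply setIntegral_congr_fun hTm
    intro z _
    have hz1 : (-z) 1 = -(z 1) := rfl
    rw [hf, hg]
    simp only [hz1, norm_neg]
  -- step 3 : integrability
  have hbase : IntegrableOn (fun z : E2 => ‖z‖ ^ (-(2+α))) T := integrableOn_rpow_norm hα hε
  have hmf : Measurable f := by
    rw [hf]
    apply Measurable.mul
    · exact Measurable.ite
        ((measurableSet_lt measurable_const hcoord).inter
          (measurableSet_lt hcoord measurable_const)) measurable_const measurable_const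
    · fun_prop
  have hmg : Measurable g := by
    rw [hg]
    apply Measurable.mul
    · exact Measurable.ite
        ((measurableSet_lt measurable_const hcoord.neg).inter
          (measurableSet_lt hcoord.neg measurable_const)) measurable_const measurable_const
    · fun_prop
  have hbound : ∀ (s : ℝ), (s = 1 ∨ s = -1) → ∀ z : E2, |s * ‖z‖ ^ (-(2+α))| ≤ ‖z‖ ^ (-(2+α)) := by
    intro s hs z
    have hXnn : 0 ≤ ‖z‖ ^ (-(2+α)) := Real.rpow_nonneg (norm_nonneg z) _
    rcases hs with rfl | rfl
    · rw [one_mul, abs_of_nonneg hXnn]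
    · rw [neg_one_mul, abs_neg, abs_of_nonneg hXnn]
  have hif : IntegrableOn f T := by
    apply hbase.mono' hmf.aestronglyMeasurable
    filter_upwards with z
    show ‖(if a < z 1 ∧ z 1 < a + 2*R then (1:ℝ) else -1) * ‖z‖ ^ (-(2+α))‖ ≤ ‖z‖ ^ (-(2+α))
    rw [Real.norm_eq_abs]
    by_cases h : a < z 1 ∧ z 1 < a + 2*R
    · rw [if_pos h]; exact hbound 1 (Or.inl rfl) z
    · rw [if_neg h]; exact hbound (-1) (Or.inr rfl) z
  have hig : IntegrableOn g T := by
    apply hbase.mono' hmg.aestronglyMeasurable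
    filter_upwards with z
    show ‖(if a < -(z 1) ∧ -(z 1) < a + 2*R then (1:ℝ) else -1) * ‖z‖ ^ (-(2+α))‖ ≤ ‖z‖ ^ (-(2+α))
    rw [Real.norm_eq_abs]
    by_cases h : a < -(z 1) ∧ -(z 1) < a + 2*R
    · rw [if_pos h]; exact hbound 1 (Or.inl rfl) z
    · rw [if_neg h]; exact hbound (-1) (Or.inr rfl) z
  -- step 4 : sum identity a.e.
  set S : Set E2 := {z : E2 | 2*R ≤ |z 1|} with hS
  have hSm : MeasurableSet S := measurableSet_le measurable_const hcoord.abs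
  have hae : ∀ᵐ z ∂(volume.restrict T), f z + g z =
      -2 * S.indicator (fun w : E2 => ‖w‖ ^ (-(2+α))) z := by
    filter_upwards [ae_restrict_of_ae ae_coord_ne] with z hz
    have hsum := sum_s hR ha hz
    rw [hf, hg]
    simp only []
    rw [← add_mul, hsum]
    by_cases h : 2*R ≤ |z 1|
    · rw [if_pos h, Set.indicator_of_mem (show z ∈ S from h)]
    · rw [if_neg h, Set.indicator_of_notMem (show z ∉ S from h), mul_zero, zero_mul]
  -- step 5 : conclude
  have h5 : (∫ z in T, f z) + (∫ z in T, g z) =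
      -2 * ∫ z in T, S.indicator (fun w : E2 => ‖w‖ ^ (-(2+α))) z := by
    rw [← integral_add hif hig, integral_congr_ae hae, integral_const_mul]
  have hsubS : S ⊆ T := by
    intro z hz
    have : 2*R ≤ ‖z‖ := le_trans hz (abs_coord_le_norm z 1)
    exact le_trans hε2 this
  have h6 : (∫ z in T, S.indicator (fun w : E2 => ‖w‖ ^ (-(2+α))) z)
      = ∫ z in S, ‖z‖ ^ (-(2+α)) := by
    rw [setIntegral_indicator hSm, Set.inter_eq_right.2 hsubS]
  rw [h1]
  have hJ : (∫ z in T, f z) + (∫ z in T, f z) =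
      -2 * ∫ z in S, ‖z‖ ^ (-(2+α)) := by
    nth_rewrite 2 [h2]
    rw [h5, h6]
  linarith [hJ]

end NMCaux

/-- **The straight band has constant positive nonlocal mean curvature.** For the band
`E_R = ℝ × (−R,R) ⊆ ℝ²`, at every `x ∈ ∂E_R` the principal value defining `H_{E_R}(x)` exists
and equals `h_R = −2 ∫_ℝ (F(2R/|t|) − F(∞)) |t|^{−1−α} dt`; this integral converges absolutely
and `h_R > 0`. -/
theorem nmc_of_straight_band
    (α R : ℝ) (hα : α ∈ Set.Ioo (0:ℝ) 1) (hR : 0 < R)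
    (E : Set (EuclideanSpace ℝ (Fin 2)))
    (hE : E = {p : EuclideanSpace ℝ (Fin 2) | -R < p 1 ∧ p 1 < R}) :
    Integrable (fun t : ℝ => (Fa α (2 * R / |t|) - FaInf α) * |t| ^ (-(1 + α))) ∧
    0 < -2 * ∫ t : ℝ, (Fa α (2 * R / |t|) - FaInf α) * |t| ^ (-(1 + α)) ∧
    ∀ x ∈ frontier E,
      Tendsto (fun ε : ℝ => -∫ y in {y | ε ≤ dist y x}, tauE E y * dist x y ^ (-(2 + α)))
        (𝓝[>] (0:ℝ))
        (𝓝 (-2 * ∫ t : ℝ, (Fa α (2 * R / |t|) - FaInf α) * |t| ^ (-(1 + α)))) := by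
  subst hE
  obtain ⟨hint, hVeq⟩ := fubini_key hα hR
  refine ⟨hint, ?_, ?_⟩
  · rw [← hVeq]
    exact Vpos hα.1 hR
  · intro x hx
    have hx' : x 1 = R ∨ x 1 = -R := by
      rcases frontier_sub hR hx with h | h
      · exact Or.inl h
      · exact Or.inr h
    rw [← hVeq]
    apply Tendsto.congr' _ tendsto_const_nhds
    filter_upwards [Ioc_mem_nhdsGT (by linarith : (0:ℝ) < 2*R)] with ε hεm
    rw [pv_eq hα.1 hR x hx' hεm.1 hεm.2, neg_neg]
end

section
/- Let λ > 0, R > 0, a ≠ 0, and let v : ℝ → ℝ be a continuous, even, 2π-periodic function with ∫_0^{2π} v(σ) cos σ dσ = 0. Define u : ℝ → ℝ by u(s) = λR + a ( cos s + v(s) ). Then u is 2π-periodic, and 2π is its minimal period: every T > 0 with u(s + T) = u(s) for all s ∈ ℝ is an integer multiple of 2π. -/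
open Real

/-- **Minimal period of the perturbed cosine profile.** Let `λ > 0`, `R > 0`, `a ≠ 0` and let
`v` be continuous, even, `2π`-periodic with `∫_0^{2π} v(σ) cos σ dσ = 0`. Then
`u(s) = λR + a(cos s + v(s))` is `2π`-periodic and `2π` is its minimal period: every `T > 0`
with `u(s+T) = u(s)` for all `s` is an integer multiple of `2π`. -/
theorem minimal_period_of_perturbed_cosine
    (lam R a : ℝ) (hlam : 0 < lam) (hR : 0 < R) (ha : a ≠ 0)
    (v : ℝ → ℝ) (hv : Continuous v) (hEven : ∀ s, v (-s) = v s)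
    (hPer : Function.Periodic v (2 * π))
    (hOrth : ∫ σ in (0:ℝ)..(2 * π), v σ * Real.cos σ = 0) :
    Function.Periodic (fun s => lam * R + a * (Real.cos s + v s)) (2 * π) ∧
    ∀ T : ℝ, 0 < T →
      (∀ s : ℝ, lam * R + a * (Real.cos (s + T) + v (s + T)) =
        lam * R + a * (Real.cos s + v s)) →
      ∃ n : ℕ, T = n * (2 * π) := by
  set w : ℝ → ℝ := fun s => Real.cos s + v s with hw
  have hwC : Continuous w := Real.continuous_cos.add hv
  have hwPer : Function.Periodic w (2 * π) := fun s => by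
    simp only [hw, hPer s, Real.cos_add_two_pi]
  constructor
  · intro s
    simp only [hPer s, Real.cos_add_two_pi]
  intro T hT hEq
  -- w is T-periodic
  have hwT : ∀ s, w (s + T) = w s := by
    intro s
    have h := hEq s
    have h2 : a * (Real.cos (s + T) + v (s + T)) = a * (Real.cos s + v s) := by linarith
    exact mul_left_cancel₀ ha h2
  -- integral of w * cos over a period is π
  have hcosInt : ∫ σ in (0:ℝ)..(2 * π), w σ * Real.cos σ = π := by
    have h1 : ∫ σ in (0:ℝ)..(2 * π), w σ * Real.cos σ =
        (∫ σ in (0:ℝ)..(2 * π), Real.cos σ ^ 2) +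
        ∫ σ in (0:ℝ)..(2 * π), v σ * Real.cos σ := by
      rw [← intervalIntegral.integral_add (f := fun σ => Real.cos σ ^ 2) (g := fun σ => v σ * Real.cos σ)
        ((Real.continuous_cos.pow 2).intervalIntegrable _ _)
        ((hv.mul Real.continuous_cos).intervalIntegrable _ _)]
      apply intervalIntegral.integral_congr
      intro x _
      simp [hw]; try ring
    rw [h1, hOrth, integral_cos_sq]
    simp [Real.sin_two_pi, Real.cos_two_pi]
    try ring
  -- integral of w * sin over a period is 0 (evenness)
  have hsinInt : ∫ σ in (0:ℝ)..(2 * π), w σ * Real.sin σ = 0 := by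
    have hper2 : Function.Periodic (fun σ => w σ * Real.sin σ) (2 * π) := fun s => by
      simp [hwPer s, Real.sin_add_two_pi]
    have hshift : ∫ σ in (0:ℝ)..(2 * π), w σ * Real.sin σ
        = ∫ σ in (-π)..(-π + 2 * π), w σ * Real.sin σ := by
      have := hper2.intervalIntegral_add_eq (-π) 0
      rw [this]; norm_num
    have hI : IntervalIntegrable (fun σ => w σ * Real.sin σ) MeasureTheory.volume (-π) 0 :=
      (hwC.mul Real.continuous_sin).intervalIntegrable _ _
    have hI2 : IntervalIntegrable (fun σ => w σ * Real.sin σ) MeasureTheory.volume 0 π :=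
      (hwC.mul Real.continuous_sin).intervalIntegrable _ _
    have hneg : ∫ σ in (-π)..(0:ℝ), w σ * Real.sin σ
        = - ∫ σ in (0:ℝ)..π, w σ * Real.sin σ := by
      have h := intervalIntegral.integral_comp_neg (a := (0:ℝ)) (b := π)
        (fun σ => w σ * Real.sin σ)
      rw [neg_zero] at h
      rw [← h]
      have : ∀ x, w (-x) * Real.sin (-x) = -(w x * Real.sin x) := by
        intro x
        simp [hw, Real.cos_neg, Real.sin_neg, hEven x]; try ring
      simp_rw [this]
      rw [intervalIntegral.integral_neg]
    rw [hshift]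
    have hsplit : ∫ σ in (-π)..(-π + 2 * π), w σ * Real.sin σ
        = (∫ σ in (-π)..(0:ℝ), w σ * Real.sin σ) + ∫ σ in (0:ℝ)..(-π + 2 * π), w σ * Real.sin σ := by
      rw [intervalIntegral.integral_add_adjacent_intervals hI
        ((hwC.mul Real.continuous_sin).intervalIntegrable _ _)]
    rw [hsplit, hneg]
    have : -π + 2 * π = π := by ring
    rw [this]
    ring
  -- the key computation
  have hgper : Function.Periodic (fun σ => w σ * Real.cos σ) (2 * π) := fun s => by
    simp [hwPer s, Real.cos_add_two_pi]
  have hhper : Function.Periodic (fun σ => w σ * Real.sin σ) (2 * π) := fun s => by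
    simp [hwPer s, Real.sin_add_two_pi]
  have hshiftg : ∫ s in (0:ℝ)..(2 * π), w (s + T) * Real.cos (s + T) = π := by
    rw [intervalIntegral.integral_comp_add_right (fun σ => w σ * Real.cos σ) T]
    have := hgper.intervalIntegral_add_eq T 0
    rw [zero_add] at this
    rw [show (0:ℝ) + T = T by ring, show 2 * π + T = T + 2 * π by ring, this, hcosInt]
  have hshifth : ∫ s in (0:ℝ)..(2 * π), w (s + T) * Real.sin (s + T) = 0 := by
    rw [intervalIntegral.integral_comp_add_right (fun σ => w σ * Real.sin σ) T]
    have := hhper.intervalIntegral_add_eq T 0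
    rw [zero_add] at this
    rw [show (0:ℝ) + T = T by ring, show 2 * π + T = T + 2 * π by ring, this, hsinInt]
  have hkey : π = Real.cos T * π := by
    have hL : ∫ s in (0:ℝ)..(2 * π), w (s + T) * Real.cos s = π := by
      have : ∀ s, w (s + T) * Real.cos s = w s * Real.cos s := fun s => by rw [hwT s]
      simp_rw [this]
      exact hcosInt
    have hR2 : ∫ s in (0:ℝ)..(2 * π), w (s + T) * Real.cos s
        = Real.cos T * π + Real.sin T * 0 := by
      have hrw : ∀ s, w (s + T) * Real.cos s
          = Real.cos T * (w (s + T) * Real.cos (s + T))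
            + Real.sin T * (w (s + T) * Real.sin (s + T)) := by
        intro s
        have : Real.cos s = Real.cos ((s + T) - T) := by ring_nf
        rw [this, Real.cos_sub]
        ring
      simp_rw [hrw]
      rw [intervalIntegral.integral_add, intervalIntegral.integral_const_mul,
        intervalIntegral.integral_const_mul, hshiftg, hshifth]
      · exact (continuous_const.mul ((hwC.comp (continuous_id.add continuous_const)).mul
          (Real.continuous_cos.comp (continuous_id.add continuous_const)))).intervalIntegrable _ _
      · exact (continuous_const.mul ((hwC.comp (continuous_id.add continuous_const)).mul
          (Real.continuous_sin.comp (continuous_id.add continuous_const)))).intervalIntegrable _ _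
    rw [hL] at hR2
    linarith [hR2]
  have hcosT : Real.cos T = 1 := by
    have hkey' : Real.cos T * π = 1 * π := by linarith
    simpa using mul_right_cancel₀ Real.pi_ne_zero hkey'
  obtain ⟨n, hn⟩ := (Real.cos_eq_one_iff T).mp hcosT
  have hnpos : 0 < n := by
    by_contra hle
    push_neg at hle
    have : (n : ℝ) * (2 * π) ≤ 0 := by
      apply mul_nonpos_of_nonpos_of_nonneg
      · exact_mod_cast hle
      · positivity
    linarith [hn ▸ hT]
  refine ⟨n.toNat, ?_⟩
  rw [← hn]
  congr 1
  exact_mod_cast (Int.toNat_of_nonneg hnpos.le).symm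
end
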